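/- Let n ≥ 3 be an integer and let θ : [0, ∞) → ℝ be a continuously differentiable function satisfying the Raychaudhuri-type inequality θ'(t) + θ(t)²/(n−2) ≤ 0 for all t ≥ 0, with θ(0) ≤ 0. Then θ is identically zero on [0, ∞). -/

import Mathlib

/-- If `θ` is C¹ on `[0, ∞)` with `θ' + θ²/(n-2) ≤ 0` (n ≥ 3) and `θ 0 ≤ 0`,
then `θ ≡ 0` on `[0, ∞)`. -/
theorem raychaudhuri_vanishing (n : ℕ) (hn : 3 ≤ n) (θ θ' : ℝ → ℝ)
    (hderiv : ∀ t ∈ Set.Ici (0:ℝ), HasDerivAt θ (θ' t) t)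
    (hcont : ContinuousOn θ' (Set.Ici 0))
    (hineq : ∀ t ∈ Set.Ici (0:ℝ), θ' t + θ t ^ 2 / ((n : ℝ) - 2) ≤ 0)
    (h0 : θ 0 ≤ 0) :
    ∀ t ∈ Set.Ici (0:ℝ), θ t = 0 := by
  have hc : (0:ℝ) < (n:ℝ) - 2 := by
    have : (3:ℝ) ≤ (n:ℝ) := by exact_mod_cast hn
    linarith
  set c : ℝ := (n:ℝ) - 2 with hcdef
  have hθ'le : ∀ t ∈ Set.Ici (0:ℝ), θ' t ≤ 0 := by
    intro t ht
    have h1 := hineq t ht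
    have h2 : 0 ≤ θ t ^ 2 / c := div_nonneg (sq_nonneg _) hc.le
    linarith
  have hcontθ : ContinuousOn θ (Set.Ici 0) := fun t ht =>
    (hderiv t ht).continuousAt.continuousWithinAt
  have hanti : AntitoneOn θ (Set.Ici 0) := by
    apply antitoneOn_of_deriv_nonpos (convex_Ici 0) hcontθ
    · intro x hx
      rw [interior_Ici] at hx
      exact (hderiv x (Set.mem_Ici.mpr hx.le)).differentiableAt.differentiableWithinAt
    · intro x hx
      rw [interior_Ici] at hx
      rw [(hderiv x (Set.mem_Ici.mpr hx.le)).deriv]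
      exact hθ'le x (Set.mem_Ici.mpr hx.le)
  have hnonneg : ∀ t ∈ Set.Ici (0:ℝ), 0 ≤ θ t := by
    by_contra h
    push_neg at h
    obtain ⟨t₀, ht₀, hneg⟩ := h
    have hle : ∀ t, t₀ ≤ t → θ t < 0 := fun t ht =>
      lt_of_le_of_lt (hanti ht₀ (le_trans ht₀ ht) ht) hneg
    set g : ℝ → ℝ := fun t => (θ t)⁻¹ - t / c with hg
    have hgderiv : ∀ t ∈ Set.Ici t₀, HasDerivAt g (-θ' t / θ t ^ 2 - 1 / c) t := by
      intro t ht
      have h1 := (hderiv t (Set.mem_Ici.mpr (le_trans ht₀ ht))).inv (hle t ht).ne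
      have h2 : HasDerivAt (fun s : ℝ => s / c) (1 / c) t := by
        simpa using (hasDerivAt_id t).div_const c
      exact h1.sub h2
    have hmono : MonotoneOn g (Set.Ici t₀) := by
      apply monotoneOn_of_deriv_nonneg (convex_Ici t₀)
      · exact fun t ht => (hgderiv t ht).continuousAt.continuousWithinAt
      · intro x hx
        rw [interior_Ici] at hx
        exact (hgderiv x (Set.mem_Ici.mpr hx.le)).differentiableAt.differentiableWithinAt
      · intro x hx
        rw [interior_Ici] at hx
        rw [(hgderiv x (Set.mem_Ici.mpr hx.le)).deriv]
        have hθx := hle x hx.le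
        have hsq : 0 < θ x ^ 2 := by nlinarith
        have h1 := hineq x (Set.mem_Ici.mpr (le_trans ht₀ hx.le))
        have h2 : θ x ^ 2 / c ≤ -θ' x := by linarith
        have h2' : θ x ^ 2 ≤ -θ' x * c := (div_le_iff₀ hc).mp h2
        have h3 : 1 / c ≤ -θ' x / θ x ^ 2 := by
          rw [div_le_div_iff₀ hc hsq]; nlinarith
        linarith
    -- take T large enough that g gives a contradiction
    set T : ℝ := t₀ + c * (-(θ t₀)⁻¹) with hT
    have hinv0 : (θ t₀)⁻¹ < 0 := inv_lt_zero.mpr hneg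
    have hTgt : t₀ ≤ T := by
      have : 0 < c * (-(θ t₀)⁻¹) := mul_pos hc (by linarith)
      simp only [hT]; linarith
    have hmle := hmono (Set.self_mem_Ici) (Set.mem_Ici.mpr hTgt) hTgt
    have hθT : (θ T)⁻¹ < 0 := inv_lt_zero.mpr (hle T hTgt)
    have hTcalc : T / c = t₀ / c + (-(θ t₀)⁻¹) := by
      simp only [hT]; field_simp
    simp only [hg] at hmle
    rw [hTcalc] at hmle
    linarith
  intro t ht
  have h1 : θ t ≤ θ 0 := hanti (Set.self_mem_Ici) ht ht
  have h2 : 0 ≤ θ t := hnonneg t ht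
  linarith
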